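/- The measure μ_R on (0,1] with density φ_R(α) = (1/log 3)(1/(3−α) + 1/(1+α)) is invariant under the jump transformation R of T with respect to the interval (0,1/2], where R(α) := T^{τ(α)+1}(α) and τ(α) := min{j ≥ 0 : T^j(α) ∈ (0,1/2]}. -/

import Mathlib

set_option maxHeartbeats 1000000

open MeasureTheory

/-- The probability measure `μ_R` on `(0,1]` with density
`φ_R(α) = (1/log 3)(1/(3−α) + 1/(1+α))`. -/
noncomputable def muR : Measure ℝ :=
  (volume.restrict (Set.Ioc (0:ℝ) 1)).withDensity
    (fun α => ENNReal.ofReal ((1 / Real.log 3) * (1 / (3 - α) + 1 / (1 + α))))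

noncomputable section
namespace MuRAux
open MeasureTheory Set Filter Topology
open scoped ENNReal

def cc (m : ℕ) : ℝ := if Even m then (m:ℝ)+2 else (m:ℝ)+3
def sg (m : ℕ) : ℝ := if Even m then 1 else -1
def ww (m : ℕ) (x : ℝ) : ℝ := cc m - 1 + sg m * x
def uu (p : ℕ × ℕ) (x : ℝ) : ℝ :=
  ((p.2:ℝ) * ww p.1 x + 1) / (((p.2:ℝ)+1) * ww p.1 x + 1)
def dd (p : ℕ × ℕ) (x : ℝ) : ℝ := -(sg p.1) / (((p.2:ℝ)+1) * ww p.1 x + 1)^2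
def phi (x : ℝ) : ℝ := (1/Real.log 3) * (1/(3-x) + 1/(1+x))
def FF (x : ℝ) (p : ℕ × ℕ) : ℝ := |dd p x| * phi (uu p x)
def gg (n : ℕ) (y : ℝ) : ℝ := ((n:ℝ) - ((n:ℝ)-1)*y)/(((n:ℝ)+1) - (n:ℝ)*y)
def rr (n : ℕ) (w : ℝ) : ℝ := ((n:ℝ)*w+1)/(((n:ℝ)+1)*w+1)


lemma abs_sg (m : ℕ) : |sg m| = 1 := by unfold sg; split <;> simp

lemma ww_bounds {m : ℕ} {x : ℝ} (hx : x ∈ Set.Ioo (0:ℝ) 1) :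
    (m:ℝ) + 1 < ww m x ∧ ww m x < (m:ℝ) + 2 := by
  unfold ww cc sg
  obtain ⟨h0, h1⟩ := hx
  split <;> constructor <;> nlinarith

lemma ww_ge_one {m : ℕ} {x : ℝ} (hx : x ∈ Set.Ioo (0:ℝ) 1) : 1 ≤ ww m x := by
  have h := (ww_bounds (m := m) hx).1
  have : (0:ℝ) ≤ (m:ℝ) := Nat.cast_nonneg m
  linarith

lemma hasSum_telescope {f : ℕ → ℝ} (hmono : ∀ n, f (n+1) ≤ f n)
    (hlim : Tendsto f atTop (nhds 0)) :
    HasSum (fun n => f n - f (n+1)) (f 0) := by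
  have hnonneg : ∀ n, 0 ≤ f n - f (n+1) := fun n => sub_nonneg.2 (hmono n)
  rw [hasSum_iff_tendsto_nat_of_nonneg hnonneg]
  have h : ∀ n, ∑ i ∈ Finset.range n, (f i - f (i+1)) = f 0 - f n := fun n =>
    Finset.sum_range_sub' f n
  simp only [h]
  simpa using tendsto_const_nhds.sub hlim

lemma tendsto_inv_linear {a b : ℝ} (ha : 0 < a) :
    Tendsto (fun n : ℕ => 1 / (a * (n:ℝ) + b)) atTop (nhds 0) := by
  have h1 : Tendsto (fun n : ℕ => a * (n:ℝ) + b) atTop atTop := by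
    apply tendsto_atTop_add_const_right
    exact (tendsto_natCast_atTop_atTop (R := ℝ)).const_mul_atTop ha
  simp only [one_div]; exact h1.inv_tendsto_atTop

lemma term_eq {w : ℝ} (hw : 1 ≤ w) (n : ℕ) :
    (1/(((n:ℝ)+1)*w+1)^2) * (1/(3 - ((n:ℝ)*w+1)/(((n:ℝ)+1)*w+1))
      + 1/(1 + ((n:ℝ)*w+1)/(((n:ℝ)+1)*w+1)))
    = (2/w) * (1/(2*w*(n:ℝ)+(w+2)) - 1/(2*w*((n:ℝ)+1)+(w+2))) := by
  have hn : (0:ℝ) ≤ (n:ℝ) := Nat.cast_nonneg n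
  have hD : 0 < ((n:ℝ)+1)*w+1 := by nlinarith
  have hb1 : 0 < 2*w*(n:ℝ)+(w+2) := by nlinarith
  have hb2 : 0 < 2*w*((n:ℝ)+1)+(w+2) := by nlinarith
  have h3 : 3 - ((n:ℝ)*w+1)/(((n:ℝ)+1)*w+1) = (2*w*((n:ℝ)+1)+(w+2))/(((n:ℝ)+1)*w+1) := by
    field_simp; ring
  have h1 : 1 + ((n:ℝ)*w+1)/(((n:ℝ)+1)*w+1) = (2*w*(n:ℝ)+(w+2))/(((n:ℝ)+1)*w+1) := by
    field_simp; ring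
  rw [h3, h1]
  field_simp
  ring

lemma inner_hasSum {w : ℝ} (hw : 1 ≤ w) :
    HasSum (fun n : ℕ => (1/(((n:ℝ)+1)*w+1)^2) *
      (1/(3 - ((n:ℝ)*w+1)/(((n:ℝ)+1)*w+1)) + 1/(1 + ((n:ℝ)*w+1)/(((n:ℝ)+1)*w+1))))
      (1/w - 1/(w+2)) := by
  have hw0 : 0 < w := by linarith
  have hmono : ∀ n : ℕ, (1:ℝ)/(2*w*((n:ℝ)+1)+(w+2)) ≤ 1/(2*w*(n:ℝ)+(w+2)) := by
    intro n
    have hn : (0:ℝ) ≤ (n:ℝ) := Nat.cast_nonneg n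
    apply one_div_le_one_div_of_le (by nlinarith) (by nlinarith)
  have hlim : Tendsto (fun n : ℕ => (1:ℝ)/(2*w*(n:ℝ)+(w+2))) atTop (nhds 0) :=
    tendsto_inv_linear (by nlinarith)
  have key := (hasSum_telescope (f := fun n : ℕ => (1:ℝ)/(2*w*(n:ℝ)+(w+2)))
    (by intro n; push_cast; exact hmono n) hlim).mul_left (2/w)
  have hval : (2/w) * ((1:ℝ)/(2*w*((0:ℕ):ℝ)+(w+2))) = 1/w - 1/(w+2) := by
    push_cast
    field_simp
    ring
  rw [hval] at key
  have hfun : (fun n : ℕ => (1/(((n:ℝ)+1)*w+1)^2) *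
      (1/(3 - ((n:ℝ)*w+1)/(((n:ℝ)+1)*w+1)) + 1/(1 + ((n:ℝ)*w+1)/(((n:ℝ)+1)*w+1))))
      = fun i : ℕ => 2 / w * (1 / (2 * w * (i:ℝ) + (w + 2)) - 1 / (2 * w * ((i + 1 : ℕ):ℝ) + (w + 2))) := by
    funext n
    push_cast
    exact term_eq hw n
  rw [hfun]
  exact key

lemma ww_even (j : ℕ) (x : ℝ) : ww (2*j) x = 2*(j:ℝ) + (1+x) := by
  unfold ww cc sg
  rw [if_pos (even_two_mul j), if_pos (even_two_mul j)]
  push_cast; ring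

lemma not_even_odd (j : ℕ) : ¬ Even (2*j+1) := by
  intro h; rw [Nat.even_add_one] at h; exact h (even_two_mul j)

lemma ww_odd (j : ℕ) (x : ℝ) : ww (2*j+1) x = 2*(j:ℝ) + (3-x) := by
  unfold ww cc sg
  rw [if_neg (not_even_odd j), if_neg (not_even_odd j)]
  push_cast; ring

lemma uu_mem {x : ℝ} (hx : x ∈ Set.Ioo (0:ℝ) 1) (p : ℕ × ℕ) :
    uu p x ∈ Set.Ioo (0:ℝ) 1 := by
  obtain ⟨m, n⟩ := p
  have hw := ww_ge_one (m := m) hx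
  have hn : (0:ℝ) ≤ (n:ℝ) := Nat.cast_nonneg n
  unfold uu
  constructor
  · apply div_pos <;> nlinarith
  · rw [div_lt_one (by nlinarith)]; nlinarith

lemma log3_pos : (0:ℝ) < Real.log 3 := Real.log_pos (by norm_num)

lemma phi_nonneg {y : ℝ} (hy : y ∈ Set.Ioo (0:ℝ) 1) : 0 ≤ phi y := by
  obtain ⟨h0, h1⟩ := hy
  have h3 : (0:ℝ) < 3 - y := by linarith
  have h1' : (0:ℝ) < 1 + y := by linarith
  have hc : (0:ℝ) ≤ 1/Real.log 3 := le_of_lt (by positivity)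
  unfold phi
  apply mul_nonneg hc
  have := le_of_lt (one_div_pos.mpr h3)
  have := le_of_lt (one_div_pos.mpr h1')
  linarith

lemma FF_nonneg {x : ℝ} (hx : x ∈ Set.Ioo (0:ℝ) 1) (p : ℕ × ℕ) : 0 ≤ FF x p :=
  mul_nonneg (abs_nonneg _) (phi_nonneg (uu_mem hx p))

lemma FF_eq {x : ℝ} (hx : x ∈ Set.Ioo (0:ℝ) 1) (m n : ℕ) :
    FF x (m,n) = (1/Real.log 3) * ((1/(((n:ℝ)+1)*(ww m x)+1)^2) *
      (1/(3 - ((n:ℝ)*(ww m x)+1)/(((n:ℝ)+1)*(ww m x)+1))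
        + 1/(1 + ((n:ℝ)*(ww m x)+1)/(((n:ℝ)+1)*(ww m x)+1)))) := by
  have hw := ww_ge_one (m := m) hx
  have hn : (0:ℝ) ≤ (n:ℝ) := Nat.cast_nonneg n
  have hD : (0:ℝ) < ((n:ℝ)+1)*(ww m x)+1 := by nlinarith
  unfold FF dd phi uu
  simp only
  rw [abs_div, abs_neg, abs_sg, abs_of_pos (by positivity : (0:ℝ) < (((n:ℝ)+1)*(ww m x)+1)^2)]
  ring

lemma fiber_hasSum {x : ℝ} (hx : x ∈ Set.Ioo (0:ℝ) 1) (m : ℕ) :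
    HasSum (fun n => FF x (m,n))
      ((1/Real.log 3) * (1/(ww m x) - 1/(ww m x + 2))) := by
  have key := (inner_hasSum (ww_ge_one (m := m) hx)).mul_left (1/Real.log 3)
  have heq : (fun n => FF x (m,n)) = fun n : ℕ =>
      (1/Real.log 3) * ((1/(((n:ℝ)+1)*(ww m x)+1)^2) *
      (1/(3 - ((n:ℝ)*(ww m x)+1)/(((n:ℝ)+1)*(ww m x)+1))
        + 1/(1 + ((n:ℝ)*(ww m x)+1)/(((n:ℝ)+1)*(ww m x)+1)))) :=
    funext fun n => FF_eq hx m n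
  rw [heq]
  exact key

lemma outer_hasSum {x : ℝ} (hx : x ∈ Set.Ioo (0:ℝ) 1) :
    HasSum (fun m => (1/Real.log 3) * (1/(ww m x) - 1/(ww m x + 2))) (phi x) := by
  obtain ⟨h0, h1⟩ := hx
  have h1x : (0:ℝ) < 1 + x := by linarith
  have h3x : (0:ℝ) < 3 - x := by linarith
  -- even part
  have hmonoE : ∀ j : ℕ, (1:ℝ)/(2*((j:ℝ)+1)+(1+x)) ≤ 1/(2*(j:ℝ)+(1+x)) := by
    intro j
    have : (0:ℝ) ≤ (j:ℝ) := Nat.cast_nonneg j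
    apply one_div_le_one_div_of_le (by linarith) (by linarith)
  have hE := hasSum_telescope (f := fun j : ℕ => (1:ℝ)/(2*(j:ℝ)+(1+x)))
    (by intro j; push_cast; exact hmonoE j) (tendsto_inv_linear (by norm_num))
  have hmonoO : ∀ j : ℕ, (1:ℝ)/(2*((j:ℝ)+1)+(3-x)) ≤ 1/(2*(j:ℝ)+(3-x)) := by
    intro j
    have : (0:ℝ) ≤ (j:ℝ) := Nat.cast_nonneg j
    apply one_div_le_one_div_of_le (by linarith) (by linarith)
  have hO := hasSum_telescope (f := fun j : ℕ => (1:ℝ)/(2*(j:ℝ)+(3-x)))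
    (by intro j; push_cast; exact hmonoO j) (tendsto_inv_linear (by norm_num))
  have he : HasSum (fun j : ℕ =>
      (1/Real.log 3) * (1/(ww (2*j) x) - 1/(ww (2*j) x + 2)))
      ((1/Real.log 3) * (1/(1+x))) := by
    have key := hE.mul_left (1/Real.log 3)
    have heq : (fun j : ℕ => (1/Real.log 3) * (1/(ww (2*j) x) - 1/(ww (2*j) x + 2)))
        = fun j : ℕ => (1/Real.log 3) *
          ((1:ℝ)/(2*(j:ℝ)+(1+x)) - 1/(2*((j+1:ℕ):ℝ)+(1+x))) := by
      funext j
      rw [ww_even]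
      push_cast
      ring_nf
    have hval : (1/Real.log 3) * ((1:ℝ)/(2*((0:ℕ):ℝ)+(1+x)))
        = (1/Real.log 3) * (1/(1+x)) := by norm_num
    rw [heq, ← hval]
    exact key
  have ho : HasSum (fun j : ℕ =>
      (1/Real.log 3) * (1/(ww (2*j+1) x) - 1/(ww (2*j+1) x + 2)))
      ((1/Real.log 3) * (1/(3-x))) := by
    have key := hO.mul_left (1/Real.log 3)
    have heq : (fun j : ℕ => (1/Real.log 3) * (1/(ww (2*j+1) x) - 1/(ww (2*j+1) x + 2)))
        = fun j : ℕ => (1/Real.log 3) *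
          ((1:ℝ)/(2*(j:ℝ)+(3-x)) - 1/(2*((j+1:ℕ):ℝ)+(3-x))) := by
      funext j
      rw [ww_odd]
      push_cast
      ring_nf
    have hval : (1/Real.log 3) * ((1:ℝ)/(2*((0:ℕ):ℝ)+(3-x)))
        = (1/Real.log 3) * (1/(3-x)) := by norm_num
    rw [heq, ← hval]
    exact key
  have key := HasSum.even_add_odd
    (f := fun m => (1/Real.log 3) * (1/(ww m x) - 1/(ww m x + 2))) he ho
  have : (1/Real.log 3) * (1/(1+x)) + (1/Real.log 3) * (1/(3-x)) = phi x := by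
    unfold phi; ring
  rw [this] at key
  exact key

lemma FF_summable {x : ℝ} (hx : x ∈ Set.Ioo (0:ℝ) 1) : Summable (FF x) := by
  rw [summable_prod_of_nonneg (fun p => FF_nonneg hx p)]
  refine ⟨fun m => (fiber_hasSum hx m).summable, ?_⟩
  have heq : (fun m => ∑' n, FF x (m, n)) = fun m =>
      (1/Real.log 3) * (1/(ww m x) - 1/(ww m x + 2)) :=
    funext fun m => (fiber_hasSum hx m).tsum_eq
  rw [heq]
  exact (outer_hasSum hx).summable

lemma FF_tsum {x : ℝ} (hx : x ∈ Set.Ioo (0:ℝ) 1) : ∑' p, FF x p = phi x := by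
  rw [Summable.tsum_prod' (FF_summable hx) (fun m => (fiber_hasSum hx m).summable)]
  have heq : (fun m => ∑' n, FF x (m, n)) = fun m =>
      (1/Real.log 3) * (1/(ww m x) - 1/(ww m x + 2)) :=
    funext fun m => (fiber_hasSum hx m).tsum_eq
  rw [show (∑' (m) (n), FF x (m, n)) = ∑' m, (1/Real.log 3) * (1/(ww m x) - 1/(ww m x + 2))
    from congrArg tsum heq]
  exact (outer_hasSum hx).tsum_eq

lemma sum_id {x : ℝ} (hx : x ∈ Set.Ioo (0:ℝ) 1) :
    (∑' p : ℕ × ℕ, ENNReal.ofReal |dd p x| * ENNReal.ofReal (phi (uu p x)))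
      = ENNReal.ofReal (phi x) := by
  have h1 : ∀ p : ℕ × ℕ, ENNReal.ofReal |dd p x| * ENNReal.ofReal (phi (uu p x))
      = ENNReal.ofReal (FF x p) := fun p => (ENNReal.ofReal_mul (abs_nonneg _)).symm
  rw [tsum_congr h1, ← ENNReal.ofReal_tsum_of_nonneg (fun p => FF_nonneg hx p) (FF_summable hx),
    FF_tsum hx]

lemma gg_zero (y : ℝ) : gg 0 y = y := by unfold gg; norm_num

lemma gg_den_pos {y : ℝ} (h1 : y ≤ 1) (n : ℕ) : 0 < ((n:ℝ)+1) - (n:ℝ)*y := by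
  have hn : (0:ℝ) ≤ (n:ℝ) := Nat.cast_nonneg n
  nlinarith

lemma gg_num_pos {y : ℝ} (h0 : 0 < y) (h1 : y ≤ 1) (n : ℕ) :
    0 < (n:ℝ) - ((n:ℝ)-1)*y := by
  have hn : (0:ℝ) ≤ (n:ℝ) := Nat.cast_nonneg n
  nlinarith

lemma gg_mem {y : ℝ} (h0 : 0 < y) (h1 : y ≤ 1) (n : ℕ) : gg n y ∈ Set.Ioc (0:ℝ) 1 := by
  have hd := gg_den_pos h1 n
  have hnum := gg_num_pos h0 h1 n
  have hn : (0:ℝ) ≤ (n:ℝ) := Nat.cast_nonneg n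
  constructor
  · exact div_pos hnum hd
  · unfold gg; rw [div_le_one hd]; nlinarith

lemma gg_gt_half {y : ℝ} (h0 : 0 < y) (h1 : y ≤ 1) (n : ℕ) : 1/2 < gg (n+1) y := by
  have hd := gg_den_pos h1 (n+1)
  have hn : (0:ℝ) ≤ (n:ℝ) := Nat.cast_nonneg n
  unfold gg
  rw [lt_div_iff₀ (by push_cast at hd ⊢; linarith)]
  push_cast
  nlinarith

lemma gg_step {y : ℝ} (h0 : 0 < y) (h1 : y ≤ 1) (n : ℕ) :
    2 - 1/(gg (n+1) y) = gg n y := by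
  have hd1 := gg_den_pos h1 (n+1)
  have hd0 := gg_den_pos h1 n
  have hnum := gg_num_pos h0 h1 (n+1)
  unfold gg at *
  push_cast at *
  have e1 : (↑n + 1 - (↑n + 1 - 1) * y) ≠ 0 := ne_of_gt hnum
  have e2 : (↑n + 1 - ↑n * y) ≠ 0 := ne_of_gt hd0
  field_simp
  ring

lemma gg_pull {a : ℝ} (ha0 : 1/2 < a) (ha1 : a ≤ 1) (i : ℕ) :
    gg (i+1) (2 - 1/a) = gg i a := by
  have ha : 0 < a := by linarith
  have hd := gg_den_pos ha1 i
  have hd2 : 0 < ((i:ℝ)+1) - (i:ℝ)*a := hd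
  unfold gg
  push_cast
  have hden : ((i:ℝ)+1+1) - ((i:ℝ)+1)*(2 - 1/a) = (((i:ℝ)+1) - (i:ℝ)*a)/a := by
    field_simp; ring
  have hnum : ((i:ℝ)+1) - ((i:ℝ)+1-1)*(2 - 1/a) = ((i:ℝ) - ((i:ℝ)-1)*a)/a := by
    field_simp; ring
  rw [hden, hnum]
  have e1 : ((i:ℝ)+1) - (i:ℝ)*a ≠ 0 := ne_of_gt hd
  have e2 : a ≠ 0 := ne_of_gt ha
  field_simp

lemma uu_eq_gg {m n : ℕ} {x : ℝ} (hw : 0 < ww m x) :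
    uu (m,n) x = gg n (1/(ww m x + 1)) := by
  have hn : (0:ℝ) ≤ (n:ℝ) := Nat.cast_nonneg n
  have h1 : ww m x + 1 ≠ 0 := by linarith
  have h2 : ((n:ℝ)+1) * ww m x + 1 ≠ 0 := by nlinarith
  unfold uu gg
  rw [div_eq_div_iff h2]
  · field_simp
    ring
  · intro h
    apply h2
    field_simp at h
    nlinarith [h]

lemma rr_anti (n : ℕ) {w1 w2 : ℝ} (h0 : 0 < w1) (h : w1 < w2) : rr n w2 < rr n w1 := by
  have hn : (0:ℝ) ≤ (n:ℝ) := Nat.cast_nonneg n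
  unfold rr
  rw [div_lt_div_iff₀ (by nlinarith) (by nlinarith)]
  nlinarith

lemma rr_anti_le (n : ℕ) {w1 w2 : ℝ} (h0 : 0 < w1) (h : w1 ≤ w2) : rr n w2 ≤ rr n w1 := by
  rcases eq_or_lt_of_le h with rfl | h'
  · exact le_refl _
  · exact le_of_lt (rr_anti n h0 h')

lemma rr_gt (n : ℕ) {w : ℝ} (h0 : 0 < w) : (n:ℝ)/((n:ℝ)+1) < rr n w := by
  have hn : (0:ℝ) ≤ (n:ℝ) := Nat.cast_nonneg n
  unfold rr
  rw [div_lt_div_iff₀ (by nlinarith) (by nlinarith)]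
  nlinarith

lemma rr_le (n : ℕ) {w : ℝ} (h1 : 1 ≤ w) : rr n w ≤ ((n:ℝ)+1)/((n:ℝ)+2) := by
  have h := rr_anti_le n (by norm_num : (0:ℝ) < 1) h1
  have : rr n 1 = ((n:ℝ)+1)/((n:ℝ)+2) := by unfold rr; ring_nf
  linarith [h, this.symm.le]

lemma uu_in_Ioo {x : ℝ} (hx : x ∈ Set.Ioo (0:ℝ) 1) (p : ℕ × ℕ) :
    uu p x ∈ Set.Ioo (rr p.2 ((p.1:ℝ)+2)) (rr p.2 ((p.1:ℝ)+1)) := by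
  obtain ⟨m, n⟩ := p
  have hb : (m:ℝ) + 1 < ww m x ∧ ww m x < (m:ℝ) + 2 := by
    unfold ww cc sg
    obtain ⟨h0, h1⟩ := hx
    split <;> constructor <;> nlinarith
  have hm : (0:ℝ) ≤ (m:ℝ) := Nat.cast_nonneg m
  have huu : uu (m,n) x = rr n (ww m x) := by unfold uu rr; rfl
  rw [huu]
  exact ⟨rr_anti n (by linarith [hb.1]) hb.2, rr_anti n (by linarith) hb.1⟩

lemma intervals_disjoint : Pairwise (Function.onFun Disjoint
    (fun p : ℕ × ℕ => Set.Ioo (rr p.2 ((p.1:ℝ)+2)) (rr p.2 ((p.1:ℝ)+1)))) := by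
  intro p q hpq
  obtain ⟨m, n⟩ := p
  obtain ⟨m', n'⟩ := q
  -- helper bounds
  have key : ∀ m n : ℕ, ∀ z ∈ Set.Ioo (rr n ((m:ℝ)+2)) (rr n ((m:ℝ)+1)),
      (n:ℝ)/((n:ℝ)+1) < z ∧ z < ((n:ℝ)+1)/((n:ℝ)+2) := by
    intro m n z hz
    have hm : (0:ℝ) ≤ (m:ℝ) := Nat.cast_nonneg m
    constructor
    · exact lt_trans (rr_gt n (by linarith)) hz.1
    · exact lt_of_lt_of_le hz.2 (rr_le n (by linarith))
  rw [Function.onFun, Set.disjoint_left]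
  intro z hz1 hz2
  rcases Nat.lt_trichotomy n n' with hn | hn | hn
  · have h1 := (key m n z hz1).2
    have h2 := (key m' n' z hz2).1
    have hcast : ((n:ℝ)+1)/((n:ℝ)+2) ≤ (n':ℝ)/((n':ℝ)+1) := by
      have hn' : (n:ℝ) + 1 ≤ (n':ℝ) := by exact_mod_cast hn
      rw [div_le_div_iff₀ (by positivity) (by positivity)]
      nlinarith [(Nat.cast_nonneg n : (0:ℝ) ≤ n), (Nat.cast_nonneg n' : (0:ℝ) ≤ n')]
    linarith
  · -- n = n', so m ≠ m'
    subst hn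
    have hm : m ≠ m' := by simpa [Prod.ext_iff] using hpq
    rcases Nat.lt_trichotomy m m' with h | h | h
    · -- m < m' : upper interval of q is rr n (m'+1) ≤ rr n (m+2)
      have hle : rr n ((m':ℝ)+1) ≤ rr n ((m:ℝ)+2) := by
        apply rr_anti_le n (by positivity)
        have : (m:ℝ) + 1 ≤ (m':ℝ) := by exact_mod_cast h
        linarith
      linarith [hz1.1, hz2.2]
    · exact hm h
    · have hle : rr n ((m:ℝ)+1) ≤ rr n ((m':ℝ)+2) := by
        apply rr_anti_le n (by positivity)
        have : (m':ℝ) + 1 ≤ (m:ℝ) := by exact_mod_cast h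
        linarith
      linarith [hz1.2, hz2.1]
  · have h1 := (key m' n' z hz2).2
    have h2 := (key m n z hz1).1
    have hcast : ((n':ℝ)+1)/((n':ℝ)+2) ≤ (n:ℝ)/((n:ℝ)+1) := by
      have hn' : (n':ℝ) + 1 ≤ (n:ℝ) := by exact_mod_cast hn
      rw [div_le_div_iff₀ (by positivity) (by positivity)]
      nlinarith [(Nat.cast_nonneg n : (0:ℝ) ≤ n), (Nat.cast_nonneg n' : (0:ℝ) ≤ n')]
    linarith



lemma muR_apply {S : Set ℝ} (hS : MeasurableSet S) (hsub : S ⊆ Set.Ioc 0 1) :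
    muR S = ∫⁻ x in S, ENNReal.ofReal (phi x) := by
  unfold muR
  rw [withDensity_apply _ hS, Measure.restrict_restrict hS,
    Set.inter_eq_self_of_subset_left hsub]
  rfl

lemma muR_countable_null {S : Set ℝ} (hS : S.Countable) : muR S = 0 := by
  unfold muR
  rw [withDensity_apply _ hS.measurableSet]
  apply setLIntegral_measure_zero
  rw [Measure.restrict_apply hS.measurableSet]
  exact measure_mono_null Set.inter_subset_left (hS.measure_zero volume)

lemma lintegral_image_1d {s : Set ℝ} {f f' : ℝ → ℝ} (hs : MeasurableSet s)
    (hf' : ∀ x ∈ s, HasDerivWithinAt f (f' x) s x) (hf : Set.InjOn f s) (g : ℝ → ℝ≥0∞) :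
    ∫⁻ x in f '' s, g x = ∫⁻ x in s, ENNReal.ofReal |f' x| * g (f x) := by
  simpa only [ContinuousLinearMap.det_toSpanSingleton] using
    lintegral_image_eq_lintegral_abs_det_fderiv_mul volume hs
      (fun x hx => (hf' x hx).hasFDerivWithinAt) hf g

lemma uu_hasDeriv (p : ℕ × ℕ) {x : ℝ} (hx : x ∈ Set.Ioo (0:ℝ) 1) :
    HasDerivAt (uu p) (dd p x) x := by
  obtain ⟨m, n⟩ := p
  have hw := ww_ge_one (m := m) hx
  have hn : (0:ℝ) ≤ (n:ℝ) := Nat.cast_nonneg n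
  have hD : ((n:ℝ)+1) * ww m x + 1 ≠ 0 := by unfold ww at *; nlinarith
  have h1 : HasDerivAt (fun z : ℝ => (n:ℝ) * (cc m - 1 + sg m * z) + 1) ((n:ℝ) * sg m) x := by
    have := (((hasDerivAt_id x).const_mul (sg m)).const_add (cc m - 1)).const_mul (n:ℝ)
    simpa using this.add_const 1
  have h2 : HasDerivAt (fun z : ℝ => ((n:ℝ)+1) * (cc m - 1 + sg m * z) + 1)
      (((n:ℝ)+1) * sg m) x := by
    have := (((hasDerivAt_id x).const_mul (sg m)).const_add (cc m - 1)).const_mul ((n:ℝ)+1)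
    simpa using this.add_const 1
  have hdiv := h1.div h2 hD
  have : uu (m, n) = fun z : ℝ =>
      ((n:ℝ) * (cc m - 1 + sg m * z) + 1) / (((n:ℝ)+1) * (cc m - 1 + sg m * z) + 1) := rfl
  rw [this]
  refine HasDerivAt.congr_deriv hdiv ?_
  unfold dd ww at *
  field_simp
  ring

lemma uu_injOn (p : ℕ × ℕ) : Set.InjOn (uu p) (Set.Ioo (0:ℝ) 1) := by
  obtain ⟨m, n⟩ := p
  intro a ha b hb hab
  have hwa := ww_ge_one (m := m) ha
  have hwb := ww_ge_one (m := m) hb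
  have hn : (0:ℝ) ≤ (n:ℝ) := Nat.cast_nonneg n
  have hDa : (0:ℝ) < ((n:ℝ)+1) * ww m a + 1 := by nlinarith
  have hDb : (0:ℝ) < ((n:ℝ)+1) * ww m b + 1 := by nlinarith
  unfold uu at hab
  rw [div_eq_div_iff (ne_of_gt hDa) (ne_of_gt hDb)] at hab
  have hw : ww m a = ww m b := by nlinarith [hab]
  have hsg : sg m ≠ 0 := by unfold sg; split <;> norm_num
  unfold ww at hw
  have : sg m * a = sg m * b := by linarith
  exact mul_left_cancel₀ hsg this

lemma uu_image_meas {A : Set ℝ} (hA : MeasurableSet A) (hsub : A ⊆ Set.Ioo 0 1)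
    (p : ℕ × ℕ) : MeasurableSet (uu p '' A) := by
  apply MeasurableSet.image_of_continuousOn_injOn hA
  · intro z hz
    exact ((uu_hasDeriv p (hsub hz)).continuousAt).continuousWithinAt
  · exact (uu_injOn p).mono hsub

lemma uu_mem01 {x : ℝ} (hx : x ∈ Set.Ioo (0:ℝ) 1) (p : ℕ × ℕ) :
    uu p x ∈ Set.Ioo (0:ℝ) 1 := by
  obtain ⟨m, n⟩ := p
  have hw := ww_ge_one (m := m) hx
  have hn : (0:ℝ) ≤ (n:ℝ) := Nat.cast_nonneg n
  unfold uu
  constructor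
  · apply div_pos <;> nlinarith
  · rw [div_lt_one (by nlinarith)]; nlinarith

lemma cov {A : Set ℝ} (hA : MeasurableSet A) (hsub : A ⊆ Set.Ioo 0 1) (p : ℕ × ℕ) :
    muR (uu p '' A)
      = ∫⁻ x in A, ENNReal.ofReal |dd p x| * ENNReal.ofReal (phi (uu p x)) := by
  have himg : uu p '' A ⊆ Set.Ioc 0 1 := by
    rintro _ ⟨z, hz, rfl⟩
    have := uu_mem01 (hsub hz) p
    exact ⟨this.1, le_of_lt this.2⟩
  rw [muR_apply (uu_image_meas hA hsub p) himg]
  exact lintegral_image_1d hA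
    (fun z hz => ((uu_hasDeriv p (hsub hz)).hasDerivWithinAt)) ((uu_injOn p).mono hsub) _



section Dynamics
variable {T R : ℝ → ℝ} {τ : ℝ → ℕ}


lemma floor_interval {x : ℝ} (hx : x ∈ Set.Ioc (0:ℝ) 1) :
    ∃ L : ℕ, 1 ≤ L ∧ x ∈ Set.Ioc (1/((L:ℝ)+1)) (1/(L:ℝ)) := by
  obtain ⟨h0, h1⟩ := hx
  have hinv : (1:ℝ) ≤ 1/x := by rw [le_div_iff₀ h0]; linarith
  refine ⟨⌊1/x⌋₊, Nat.le_floor (by exact_mod_cast hinv), ?_, ?_⟩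
  · have := Nat.lt_floor_add_one (1/x)
    rw [div_lt_iff₀ h0] at this
    rw [div_lt_iff₀ (by positivity : (0:ℝ) < (⌊1/x⌋₊:ℝ)+1)]
    nlinarith [this]
  · have hfl : ((⌊1/x⌋₊:ℕ):ℝ) ≤ 1/x := Nat.floor_le (by positivity)
    have hpos : (0:ℝ) < (⌊1/x⌋₊:ℝ) := by
      have : (1:ℕ) ≤ ⌊1/x⌋₊ := Nat.le_floor (by exact_mod_cast hinv)
      exact_mod_cast Nat.lt_of_lt_of_le Nat.zero_lt_one this
    rw [le_div_iff₀ hpos]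
    rw [le_div_iff₀ h0] at hfl
    linarith

lemma T_branch
    (hT1 : ∀ k : ℕ, 1 ≤ k → ∀ α ∈ Set.Ioc (1 / (2 * (k:ℝ))) (1 / (2 * (k:ℝ) - 1)),
      T α = 2 * (k:ℝ) - 1 / α)
    (hT2 : ∀ k : ℕ, 1 ≤ k → ∀ α ∈ Set.Ioc (1 / (2 * (k:ℝ) + 1)) (1 / (2 * (k:ℝ))),
      T α = 1 / α - 2 * (k:ℝ))
    {L : ℕ} (hL : 2 ≤ L) {y : ℝ} (hy : y ∈ Set.Ioc (1/((L:ℝ)+1)) (1/(L:ℝ))) :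
    (Even L → T y = 1/y - L) ∧ (¬ Even L → T y = (L:ℝ)+1 - 1/y) := by
  constructor
  · intro hEv
    obtain ⟨k, hk⟩ := hEv
    have hk1 : 1 ≤ k := by omega
    have hcast : 2 * (k:ℝ) = (L:ℝ) := by rw [hk]; push_cast; ring
    have := hT2 k hk1 y (by rw [hcast]; exact hy)
    rw [this, hcast]
  · intro hOdd
    obtain ⟨k, hk⟩ := Nat.not_even_iff_odd.mp hOdd
    have hk1 : 1 ≤ k + 1 := by omega
    have hc1 : 2 * ((k+1:ℕ):ℝ) = (L:ℝ) + 1 := by rw [hk]; push_cast; ring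
    have hc2 : 2 * ((k+1:ℕ):ℝ) - 1 = (L:ℝ) := by rw [hk]; push_cast; ring
    have := hT1 (k+1) hk1 y (by rw [hc2, hc1]; exact hy)
    rw [this, hc1]

lemma T_maps
    (hT1 : ∀ k : ℕ, 1 ≤ k → ∀ α ∈ Set.Ioc (1 / (2 * (k:ℝ))) (1 / (2 * (k:ℝ) - 1)),
      T α = 2 * (k:ℝ) - 1 / α)
    (hT2 : ∀ k : ℕ, 1 ≤ k → ∀ α ∈ Set.Ioc (1 / (2 * (k:ℝ) + 1)) (1 / (2 * (k:ℝ))),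
      T α = 1 / α - 2 * (k:ℝ))
    {x : ℝ} (hx : x ∈ Set.Ioc (0:ℝ) 1) : T x ∈ Set.Icc (0:ℝ) 1 := by
  obtain ⟨L, hL1, hxL⟩ := floor_interval hx
  obtain ⟨hxlo, hxhi⟩ := hxL
  have hx0 := hx.1
  have hL0 : (0:ℝ) < (L:ℝ) := by exact_mod_cast hL1
  have hinvlo : (L:ℝ) ≤ 1/x := by
    rw [le_div_iff₀ hx0]
    rw [le_div_iff₀ hL0] at hxhi
    nlinarith
  have hinvhi : 1/x < (L:ℝ)+1 := by
    rw [div_lt_iff₀ hx0]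
    rw [div_lt_iff₀ (by positivity : (0:ℝ) < (L:ℝ)+1)] at hxlo
    linarith
  rcases Nat.lt_or_ge L 2 with h2 | h2
  · -- L = 1
    have hL : L = 1 := by omega
    subst hL
    have := hT1 1 le_rfl x (by norm_num at hxlo hxhi ⊢; exact ⟨hxlo, hxhi⟩)
    rw [this]
    push_cast at hinvlo hinvhi
    constructor <;> [linarith; linarith]
  · rcases Classical.em (Even L) with hEv | hOdd
    · rw [(T_branch hT1 hT2 h2 ⟨hxlo, hxhi⟩).1 hEv]
      constructor <;> linarith
    · rw [(T_branch hT1 hT2 h2 ⟨hxlo, hxhi⟩).2 hOdd]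
      constructor <;> linarith

lemma orbit_mem
    (hT1 : ∀ k : ℕ, 1 ≤ k → ∀ α ∈ Set.Ioc (1 / (2 * (k:ℝ))) (1 / (2 * (k:ℝ) - 1)),
      T α = 2 * (k:ℝ) - 1 / α)
    (hT2 : ∀ k : ℕ, 1 ≤ k → ∀ α ∈ Set.Ioc (1 / (2 * (k:ℝ) + 1)) (1 / (2 * (k:ℝ))),
      T α = 1 / α - 2 * (k:ℝ))
    {α : ℝ} (hα : α ∈ Set.Ioc (0:ℝ) 1) (h0 : ∀ j : ℕ, T^[j] α ≠ 0) :
    ∀ j : ℕ, T^[j] α ∈ Set.Ioc (0:ℝ) 1 := by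
  intro j
  induction j with
  | zero => simpa using hα
  | succ j ih =>
    rw [Function.iterate_succ_apply']
    have := T_maps hT1 hT2 ih
    have hne := h0 (j+1)
    rw [Function.iterate_succ_apply'] at hne
    exact ⟨lt_of_le_of_ne this.1 (Ne.symm hne), this.2⟩


lemma claimB
    (hT1 : ∀ k : ℕ, 1 ≤ k → ∀ α ∈ Set.Ioc (1 / (2 * (k:ℝ))) (1 / (2 * (k:ℝ) - 1)),
      T α = 2 * (k:ℝ) - 1 / α)
    (hT2 : ∀ k : ℕ, 1 ≤ k → ∀ α ∈ Set.Ioc (1 / (2 * (k:ℝ) + 1)) (1 / (2 * (k:ℝ))),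
      T α = 1 / α - 2 * (k:ℝ))
    (hτ : ∀ α ∈ Set.Ioc (0:ℝ) 1, (∃ j : ℕ, T^[j] α ≤ 1 / 2) →
      (T^[τ α] α ≤ 1 / 2 ∧ ∀ i < τ α, ¬ T^[i] α ≤ 1 / 2))
    (hR : ∀ α, R α = T^[τ α + 1] α)
    (p : ℕ × ℕ) {x : ℝ} (hx : x ∈ Set.Ioo (0:ℝ) 1) :
    uu p x ∈ Set.Ioc (0:ℝ) 1 ∧ R (uu p x) = x := by
  obtain ⟨m, n⟩ := p
  have hwb := ww_bounds (m := m) hx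
  have hm : (0:ℝ) ≤ (m:ℝ) := Nat.cast_nonneg m
  have hw0 : 0 < ww m x := by linarith [hwb.1]
  set w := ww m x with hwdef
  have hw1 : (m:ℝ)+1 < w := hwb.1
  have hw2 : w < (m:ℝ)+2 := hwb.2
  set y := 1/(w+1) with hydef
  have hy0 : 0 < y := by rw [hydef]; positivity
  have hylo : 1/((m:ℝ)+3) < y := by
    rw [hydef]
    apply one_div_lt_one_div_of_lt (by positivity) (by linarith)
  have hyhi : y ≤ 1/((m:ℝ)+2) := by
    rw [hydef]
    exact le_of_lt (one_div_lt_one_div_of_lt (by linarith) (by linarith))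
  have hyhalf : y ≤ 1/2 := by
    apply le_trans hyhi
    apply one_div_le_one_div_of_le (by norm_num) (by linarith)
  have hy1 : y ≤ 1 := le_trans hyhalf (by norm_num)
  have halpha : uu (m,n) x = gg n y := uu_eq_gg hw0
  have hiter : ∀ i, i ≤ n → T^[i] (gg n y) = gg (n - i) y := by
    intro i
    induction i with
    | zero => intro _; simp
    | succ i ih =>
      intro hin
      have hi : i ≤ n := by omega
      rw [Function.iterate_succ_apply', ih hi]
      have hj : n - i = (n - (i+1)) + 1 := by omega
      rw [hj]
      have hmemg : gg ((n - (i+1))+1) y ∈ Set.Ioc (1/2 : ℝ) 1 :=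
        ⟨gg_gt_half hy0 hy1 _, (gg_mem hy0 hy1 _).2⟩
      have hTg := hT1 1 le_rfl (gg ((n - (i+1))+1) y)
        (by push_cast; norm_num; exact ⟨hmemg.1, hmemg.2⟩)
      rw [hTg]
      push_cast
      have hstep := gg_step hy0 hy1 (n - (i+1))
      linarith [hstep]
  have hα_mem : gg n y ∈ Set.Ioc (0:ℝ) 1 := gg_mem hy0 hy1 n
  have hTn : T^[n] (gg n y) = y := by
    rw [hiter n le_rfl, Nat.sub_self, gg_zero]
  have hexists : ∃ j, T^[j] (gg n y) ≤ 1/2 := ⟨n, by rw [hTn]; exact hyhalf⟩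
  obtain ⟨hspec1, hspec2⟩ := hτ (gg n y) hα_mem hexists
  have hτn : τ (gg n y) = n := by
    by_contra hne
    rcases Nat.lt_or_ge (τ (gg n y)) n with hlt | hge
    · rw [hiter _ (le_of_lt hlt)] at hspec1
      have hsub : n - τ (gg n y) = (n - τ (gg n y) - 1) + 1 := by omega
      rw [hsub] at hspec1
      exact absurd hspec1 (not_le.mpr (gg_gt_half hy0 hy1 _))
    · have hgt : n < τ (gg n y) := by omega
      exact (hspec2 n hgt) (by rw [hTn]; exact hyhalf)
  have hRval : R (gg n y) = T y := by
    rw [hR, hτn, Function.iterate_succ_apply', hTn]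
  have hpar : Even (m+2) ↔ Even m := by simp [Nat.even_add]
  have hTy : T y = x := by
    have hL2 : 2 ≤ m + 2 := by omega
    have hcast : ((m+2:ℕ):ℝ) = (m:ℝ)+2 := by push_cast; ring
    have hmem : y ∈ Set.Ioc (1/(((m+2:ℕ):ℝ)+1)) (1/((m+2:ℕ):ℝ)) := by
      rw [hcast]
      have h3 : (m:ℝ)+2+1 = (m:ℝ)+3 := by ring
      rw [h3]
      exact ⟨hylo, hyhi⟩
    have hbr := T_branch hT1 hT2 hL2 hmem
    have h1y : 1/y = w + 1 := by rw [hydef, one_div_one_div]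
    rcases Classical.em (Even m) with hEv | hOdd
    · rw [hbr.1 (hpar.mpr hEv), hcast, h1y, hwdef]
      unfold ww cc sg
      rw [if_pos hEv, if_pos hEv]
      ring
    · rw [hbr.2 (fun h => hOdd (hpar.mp h)), hcast, h1y, hwdef]
      unfold ww cc sg
      rw [if_neg hOdd, if_neg hOdd]
      ring
  refine ⟨by rw [halpha]; exact hα_mem, by rw [halpha, hRval]; exact hTy⟩


lemma claimA
    (hT1 : ∀ k : ℕ, 1 ≤ k → ∀ α ∈ Set.Ioc (1 / (2 * (k:ℝ))) (1 / (2 * (k:ℝ) - 1)),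
      T α = 2 * (k:ℝ) - 1 / α)
    (hT2 : ∀ k : ℕ, 1 ≤ k → ∀ α ∈ Set.Ioc (1 / (2 * (k:ℝ) + 1)) (1 / (2 * (k:ℝ))),
      T α = 1 / α - 2 * (k:ℝ))
    (hτ : ∀ α ∈ Set.Ioc (0:ℝ) 1, (∃ j : ℕ, T^[j] α ≤ 1 / 2) →
      (T^[τ α] α ≤ 1 / 2 ∧ ∀ i < τ α, ¬ T^[i] α ≤ 1 / 2))
    (hR : ∀ α, R α = T^[τ α + 1] α)
    {α : ℝ} (hα : α ∈ Set.Ioc (0:ℝ) 1) (hnz : ∀ j : ℕ, T^[j] α ≠ 0)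
    (hex : ∃ j : ℕ, T^[j] α ≤ 1/2) :
    ∃ p : ℕ × ℕ, α = uu p (R α) := by
  obtain ⟨hspec1, hspec2⟩ := hτ α hα hex
  have horb := orbit_mem hT1 hT2 hα hnz
  set n := τ α with hn
  set y := T^[n] α with hy
  have hymem : y ∈ Set.Ioc (0:ℝ) 1 := horb n
  have hy0 : 0 < y := hymem.1
  have hyhalf : y ≤ 1/2 := hspec1
  obtain ⟨L, hL1, hyL⟩ := floor_interval hymem
  have hL2 : 2 ≤ L := by
    by_contra h
    have hL : L = 1 := by omega
    rw [hL] at hyL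
    have : (1:ℝ)/(1+1) < y := by exact_mod_cast hyL.1
    norm_num at this
    linarith
  -- reconstruction: α = gg i (T^[i] α) for i ≤ n
  have hrec : ∀ i, i ≤ n → α = gg i (T^[i] α) := by
    intro i
    induction i with
    | zero => intro _; rw [gg_zero]; rfl
    | succ i ih =>
      intro hin
      have hi : i < n := by omega
      have hgthalf : ¬ T^[i] α ≤ 1/2 := hspec2 i hi
      have hmemi : T^[i] α ∈ Set.Ioc (0:ℝ) 1 := horb i
      have ha0 : 1/2 < T^[i] α := not_le.mp hgthalf
      have ha1 : T^[i] α ≤ 1 := hmemi.2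
      have hTstep : T^[i+1] α = 2 - 1/(T^[i] α) := by
        rw [Function.iterate_succ_apply']
        have := hT1 1 le_rfl (T^[i] α) (by push_cast; norm_num; exact ⟨ha0, ha1⟩)
        rw [this]; push_cast; ring
      rw [hTstep, gg_pull ha0 ha1 i]
      exact ih (le_of_lt hi)
  -- choose m := L - 2
  set m := L - 2 with hm
  have hLm : L = m + 2 := by omega
  have hcast : (L:ℝ) = (m:ℝ) + 2 := by rw [hLm]; push_cast; ring
  -- value x := R α = T y
  have hRy : R α = T y := by
    rw [hR, ← hn, Function.iterate_succ_apply', ← hy]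
  have hbr := T_branch hT1 hT2 hL2 hyL
  have hpar : Even (m+2) ↔ Even m := by simp [Nat.even_add]
  -- show 1/(ww m (R α) + 1) = y  and 0 < ww m (R α)
  have hkey : ww m (R α) + 1 = 1/y ∧ 0 < ww m (R α) := by
    have h1L : (L:ℝ) ≤ 1/y := by
      rw [le_div_iff₀ hy0]
      have := hyL.2
      rw [le_div_iff₀ (by exact_mod_cast Nat.lt_of_lt_of_le Nat.zero_lt_one hL1 : (0:ℝ) < (L:ℝ))] at this
      nlinarith
    rcases Classical.em (Even m) with hEv | hOdd
    · have hEvL : Even L := by rw [hLm]; exact hpar.mpr hEv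
      have hxval : R α = 1/y - L := by rw [hRy]; exact hbr.1 hEvL
      constructor
      · unfold ww cc sg
        rw [if_pos hEv, if_pos hEv, hxval, hcast]
        ring
      · unfold ww cc sg
        rw [if_pos hEv, if_pos hEv, hxval, hcast]
        have : (0:ℝ) ≤ (m:ℝ) := Nat.cast_nonneg m
        nlinarith
    · have hOddL : ¬ Even L := by rw [hLm]; exact fun h => hOdd (hpar.mp h)
      have hxval : R α = (L:ℝ) + 1 - 1/y := by rw [hRy]; exact hbr.2 hOddL
      constructor
      · unfold ww cc sg
        rw [if_neg hOdd, if_neg hOdd, hxval, hcast]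
        ring
      · unfold ww cc sg
        rw [if_neg hOdd, if_neg hOdd, hxval, hcast]
        have : (0:ℝ) ≤ (m:ℝ) := Nat.cast_nonneg m
        nlinarith
  refine ⟨(m, n), ?_⟩
  rw [uu_eq_gg hkey.2, hkey.1, one_div_one_div]
  exact hrec n le_rfl


lemma preimage_sub
    (hT1 : ∀ k : ℕ, 1 ≤ k → ∀ α ∈ Set.Ioc (1 / (2 * (k:ℝ))) (1 / (2 * (k:ℝ) - 1)),
      T α = 2 * (k:ℝ) - 1 / α)
    (hT2 : ∀ k : ℕ, 1 ≤ k → ∀ α ∈ Set.Ioc (1 / (2 * (k:ℝ) + 1)) (1 / (2 * (k:ℝ))),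
      T α = 1 / α - 2 * (k:ℝ))
    (hτ : ∀ α ∈ Set.Ioc (0:ℝ) 1, (∃ j : ℕ, T^[j] α ≤ 1 / 2) →
      (T^[τ α] α ≤ 1 / 2 ∧ ∀ i < τ α, ¬ T^[i] α ≤ 1 / 2))
    (hR : ∀ α, R α = T^[τ α + 1] α)
    (A : Set ℝ) :
    R ⁻¹' A ∩ Set.Ioc 0 1 ⊆ (⋃ p : ℕ × ℕ, uu p '' A) ∪
      {α ∈ Set.Ioc (0:ℝ) 1 | (∃ j : ℕ, T^[j] α = 0) ∨ ¬ ∃ j : ℕ, T^[j] α ≤ 1 / 2} := by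
  rintro α ⟨hRA, hI⟩
  by_cases hbad : (∃ j : ℕ, T^[j] α = 0) ∨ ¬ ∃ j : ℕ, T^[j] α ≤ 1 / 2
  · exact Or.inr ⟨hI, hbad⟩
  · push_neg at hbad
    obtain ⟨p, hp⟩ := claimA hT1 hT2 hτ hR hI hbad.1 hbad.2
    exact Or.inl (Set.mem_iUnion.mpr ⟨p, ⟨R α, hRA, hp.symm⟩⟩)

lemma main_Ioo
    (hT1 : ∀ k : ℕ, 1 ≤ k → ∀ α ∈ Set.Ioc (1 / (2 * (k:ℝ))) (1 / (2 * (k:ℝ) - 1)),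
      T α = 2 * (k:ℝ) - 1 / α)
    (hT2 : ∀ k : ℕ, 1 ≤ k → ∀ α ∈ Set.Ioc (1 / (2 * (k:ℝ) + 1)) (1 / (2 * (k:ℝ))),
      T α = 1 / α - 2 * (k:ℝ))
    (hτ : ∀ α ∈ Set.Ioc (0:ℝ) 1, (∃ j : ℕ, T^[j] α ≤ 1 / 2) →
      (T^[τ α] α ≤ 1 / 2 ∧ ∀ i < τ α, ¬ T^[i] α ≤ 1 / 2))
    (hR : ∀ α, R α = T^[τ α + 1] α)
    (hE : Set.Countable {α ∈ Set.Ioc (0:ℝ) 1 |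
      (∃ j : ℕ, T^[j] α = 0) ∨ ¬ ∃ j : ℕ, T^[j] α ≤ 1 / 2})
    {A : Set ℝ} (hA : MeasurableSet A) (hsub : A ⊆ Set.Ioo 0 1) :
    muR (R ⁻¹' A ∩ Set.Ioc 0 1) = muR A := by
  have hUsub : (⋃ p : ℕ × ℕ, uu p '' A) ⊆ R ⁻¹' A ∩ Set.Ioc 0 1 := by
    rintro z hz
    obtain ⟨p, hz'⟩ := Set.mem_iUnion.mp hz
    obtain ⟨x, hxA, rfl⟩ := hz'
    have hB := claimB hT1 hT2 hτ hR p (hsub hxA)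
    exact ⟨by rw [Set.mem_preimage, hB.2]; exact hxA, hB.1⟩
  have e1 : muR (R ⁻¹' A ∩ Set.Ioc 0 1) = muR (⋃ p : ℕ × ℕ, uu p '' A) := by
    apply le_antisymm
    · calc muR (R ⁻¹' A ∩ Set.Ioc 0 1)
          ≤ muR ((⋃ p : ℕ × ℕ, uu p '' A) ∪ _) :=
            measure_mono (preimage_sub hT1 hT2 hτ hR A)
        _ ≤ muR (⋃ p : ℕ × ℕ, uu p '' A) + muR _ := measure_union_le _ _
        _ = muR (⋃ p : ℕ × ℕ, uu p '' A) := by rw [muR_countable_null hE, add_zero]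
    · exact measure_mono hUsub
  have e2 : muR (⋃ p : ℕ × ℕ, uu p '' A) = ∑' p : ℕ × ℕ, muR (uu p '' A) := by
    apply measure_iUnion ?_ (uu_image_meas hA hsub)
    intro p q hpq
    have hs1 : uu p '' A ⊆ Set.Ioo (rr p.2 ((p.1:ℝ)+2)) (rr p.2 ((p.1:ℝ)+1)) := by
      rintro _ ⟨z, hz, rfl⟩; exact uu_in_Ioo (hsub hz) p
    have hs2 : uu q '' A ⊆ Set.Ioo (rr q.2 ((q.1:ℝ)+2)) (rr q.2 ((q.1:ℝ)+1)) := by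
      rintro _ ⟨z, hz, rfl⟩; exact uu_in_Ioo (hsub hz) q
    exact (intervals_disjoint hpq).mono hs1 hs2
  have hmeas : ∀ p : ℕ × ℕ, Measurable fun x =>
      ENNReal.ofReal |dd p x| * ENNReal.ofReal (phi (uu p x)) := by
    intro p
    refine Measurable.mul (f := fun x => ENNReal.ofReal |dd p x|)
      (g := fun x => ENNReal.ofReal (phi (uu p x))) ?_ ?_
    · apply Measurable.ennreal_ofReal
      apply Measurable.abs
      unfold dd ww
      fun_prop
    · apply Measurable.ennreal_ofReal
      unfold phi uu ww
      fun_prop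
  calc muR (R ⁻¹' A ∩ Set.Ioc 0 1)
      = ∑' p : ℕ × ℕ, muR (uu p '' A) := by rw [e1, e2]
    _ = ∑' p : ℕ × ℕ, ∫⁻ x in A,
          ENNReal.ofReal |dd p x| * ENNReal.ofReal (phi (uu p x)) :=
        tsum_congr (cov hA hsub)
    _ = ∫⁻ x in A, ∑' p : ℕ × ℕ,
          ENNReal.ofReal |dd p x| * ENNReal.ofReal (phi (uu p x)) :=
        (lintegral_tsum (fun p => (hmeas p).aemeasurable)).symm
    _ = ∫⁻ x in A, ENNReal.ofReal (phi x) := by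
        apply setLIntegral_congr_fun hA
        exact (fun x hx => sum_id (hsub hx))
    _ = muR A := (muR_apply hA (hsub.trans Set.Ioo_subset_Ioc_self)).symm


end Dynamics

end MuRAux
end

/-- `μ_R` is invariant under the jump transformation `R(α) = T^{τ(α)+1}(α)` of the
even-continued-fraction map `T` with respect to the interval `(0,1/2]`, where
`τ(α) = min{j ≥ 0 : T^j(α) ≤ 1/2}` (defined outside a countable exceptional set). -/
theorem muR_invariant_under_R (T R : ℝ → ℝ) (τ : ℝ → ℕ)
    (hT1 : ∀ k : ℕ, 1 ≤ k → ∀ α ∈ Set.Ioc (1 / (2 * (k:ℝ))) (1 / (2 * (k:ℝ) - 1)),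
      T α = 2 * (k:ℝ) - 1 / α)
    (hT2 : ∀ k : ℕ, 1 ≤ k → ∀ α ∈ Set.Ioc (1 / (2 * (k:ℝ) + 1)) (1 / (2 * (k:ℝ))),
      T α = 1 / α - 2 * (k:ℝ))
    (hτ : ∀ α ∈ Set.Ioc (0:ℝ) 1, (∃ j : ℕ, T^[j] α ≤ 1 / 2) →
      (T^[τ α] α ≤ 1 / 2 ∧ ∀ i < τ α, ¬ T^[i] α ≤ 1 / 2))
    (hR : ∀ α, R α = T^[τ α + 1] α)
    (hE : Set.Countable {α ∈ Set.Ioc (0:ℝ) 1 |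
      (∃ j : ℕ, T^[j] α = 0) ∨ ¬ ∃ j : ℕ, T^[j] α ≤ 1 / 2}) :
    ∀ A : Set ℝ, MeasurableSet A → A ⊆ Set.Ioc 0 1 →
      muR (R ⁻¹' A ∩ Set.Ioc 0 1) = muR A := by
  intro A hA hsub
  have hA0 : MeasurableSet (A \ {1}) := hA.diff (measurableSet_singleton 1)
  have hA0sub : A \ {1} ⊆ Set.Ioo 0 1 := by
    rintro a ⟨haA, ha1⟩
    have := hsub haA
    exact ⟨this.1, lt_of_le_of_ne this.2 (by simpa using ha1)⟩
  have h1 : muR (A \ {1}) = muR A :=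
    measure_diff_null (MuRAux.muR_countable_null (Set.countable_singleton 1))
  have key0 := MuRAux.main_Ioo hT1 hT2 hτ hR hE hA0 hA0sub
  have h1null : muR (R ⁻¹' {1} ∩ Set.Ioc 0 1) = 0 := by
    apply measure_mono_null (MuRAux.preimage_sub hT1 hT2 hτ hR {1})
    apply MuRAux.muR_countable_null
    apply Set.Countable.union
    · exact Set.countable_iUnion (fun p => (Set.countable_singleton 1).image _)
    · exact hE
  have hsplit : R ⁻¹' A ∩ Set.Ioc 0 1 ⊆
      (R ⁻¹' (A \ {1}) ∩ Set.Ioc 0 1) ∪ (R ⁻¹' {1} ∩ Set.Ioc 0 1) := by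
    rintro α ⟨hRA, hI⟩
    by_cases hone : R α = 1
    · exact Or.inr ⟨by simp [hone], hI⟩
    · exact Or.inl ⟨⟨hRA, by simpa using hone⟩, hI⟩
  have hrev : R ⁻¹' (A \ {1}) ∩ Set.Ioc 0 1 ⊆ R ⁻¹' A ∩ Set.Ioc 0 1 :=
    Set.inter_subset_inter_left _ (Set.preimage_mono Set.diff_subset)
  have e : muR (R ⁻¹' A ∩ Set.Ioc 0 1) = muR (R ⁻¹' (A \ {1}) ∩ Set.Ioc 0 1) := by
    apply le_antisymm
    · calc muR (R ⁻¹' A ∩ Set.Ioc 0 1)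
          ≤ muR ((R ⁻¹' (A \ {1}) ∩ Set.Ioc 0 1) ∪ (R ⁻¹' {1} ∩ Set.Ioc 0 1)) :=
            measure_mono hsplit
        _ ≤ muR (R ⁻¹' (A \ {1}) ∩ Set.Ioc 0 1) + muR (R ⁻¹' {1} ∩ Set.Ioc 0 1) :=
            measure_union_le _ _
        _ = muR (R ⁻¹' (A \ {1}) ∩ Set.Ioc 0 1) := by rw [h1null, add_zero]
    · exact measure_mono hrev
  rw [e, key0, h1]
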